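/- The solvable set is an upward-closed interval: if the equation Δv = -λ' e^{g(v₀+v)}(e^{g(v₀+v)}-1)² + 4πN/|V| has a solution for some λ' > 0, then for every λ > λ' the equation with λ in place of λ' has a solution; hence Λ = {λ > 0 : the equation is solvable} is an interval unbounded above. -/

import Mathlib

open Finset Real

noncomputable def Ffun (g : ℝ → ℝ) (t : ℝ) : ℝ := Real.exp (g t) * (Real.exp (g t) - 1)^2
noncomputable def Gfun (g : ℝ → ℝ) (t : ℝ) : ℝ := -(Real.exp (g t) - 1)^4 / 4

set_option linter.unusedSectionVars false


private lemma f_strictMonoOn : StrictMonoOn (fun s : ℝ => 1 + s - Real.exp s) (Set.Iic 0) := by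
  intro s hs s' hs' hss
  simp only [Set.mem_Iic] at hs hs'
  have hA : (s - s') + 1 < Real.exp (s - s') := Real.add_one_lt_exp (by linarith)
  have hB : Real.exp s' * Real.exp (s - s') = Real.exp s := by
    rw [← Real.exp_add]; ring_nf
  have hC : Real.exp s' ≤ 1 := Real.exp_le_one_iff.2 hs'
  have hD : (0:ℝ) < Real.exp s' := Real.exp_pos s'
  have hE := mul_lt_mul_of_pos_left hA hD
  rw [hB] at hE
  simp only
  nlinarith [mul_nonneg (sub_nonneg.2 hC) (sub_pos.2 hss).le]

section gfacts

variable (g : ℝ → ℝ)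
variable (hg : ∀ t ≤ (0:ℝ), 1 + g t - Real.exp (g t) = t)
variable (hgneg : ∀ t ≤ (0:ℝ), g t ≤ 0)

include hg hgneg in
private lemma g_zero : g 0 = 0 := by
  by_contra h
  have h1 := Real.add_one_lt_exp h
  have h2 := hg 0 le_rfl
  linarith

include hg hgneg in
private lemma g_neg : ∀ t < (0:ℝ), g t < 0 := by
  intro t ht
  rcases lt_or_eq_of_le (hgneg t ht.le) with h | h
  · exact h
  · exfalso
    have := hg t ht.le
    rw [h] at this
    simp at this
    linarith

include hg hgneg in
private lemma ghat_cont : Continuous (fun t : ℝ => if t ≤ 0 then g t else t) := by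
  have hsm : StrictMono (fun t : ℝ => if t ≤ 0 then g t else t) := by
    intro a b hab
    by_cases hb : b ≤ 0
    · have ha : a ≤ 0 := le_trans hab.le hb
      simp only [if_pos ha, if_pos hb]
      have := (f_strictMonoOn.lt_iff_lt (Set.mem_Iic.2 (hgneg a ha))
        (Set.mem_Iic.2 (hgneg b hb))).1
      apply this
      show (1:ℝ) + g a - Real.exp (g a) < 1 + g b - Real.exp (g b)
      rw [hg a ha, hg b hb]
      exact hab
    · by_cases ha : a ≤ 0
      · simp only [if_pos ha, if_neg hb]
        have h1 : g a ≤ 0 := hgneg a ha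
        push_neg at hb
        linarith
      · simp only [if_neg ha, if_neg hb]
        exact hab
  have hsurj : Function.Surjective (fun t : ℝ => if t ≤ 0 then g t else t) := by
    intro y
    by_cases hy : y ≤ 0
    · refine ⟨1 + y - Real.exp y, ?_⟩
      have hfy : 1 + y - Real.exp y ≤ 0 := by nlinarith [Real.add_one_le_exp y]
      simp only [if_pos hfy]
      have h1 := hg _ hfy
      exact f_strictMonoOn.injOn (Set.mem_Iic.2 (hgneg _ hfy)) (Set.mem_Iic.2 hy) h1
    · exact ⟨y, by simp [hy]⟩
  have := (StrictMono.orderIsoOfSurjective _ hsm hsurj).continuous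
  simpa [StrictMono.coe_orderIsoOfSurjective] using this

include hg hgneg in
private lemma g_contOn : ContinuousOn g (Set.Iic 0) := by
  apply (ghat_cont g hg hgneg).continuousOn.congr
  intro t ht
  simp [Set.mem_Iic.1 ht]

include hg hgneg in
private lemma g_contAt {t : ℝ} (ht : t < 0) : ContinuousAt g t := by
  apply (ghat_cont g hg hgneg).continuousAt.congr
  filter_upwards [Iio_mem_nhds ht] with s hs
  have hs' : s < 0 := hs
  simp [hs'.le]

include hg hgneg in
private lemma g_hasDeriv {t : ℝ} (ht : t < 0) : HasDerivAt g (1 - Real.exp (g t))⁻¹ t := by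
  have hgt : g t < 0 := g_neg g hg hgneg t ht
  have hf : HasDerivAt (fun s => 1 + s - Real.exp s) (1 - Real.exp (g t)) (g t) := by
    exact ((hasDerivAt_id (g t)).const_add 1).sub (Real.hasDerivAt_exp (g t))
  refine HasDerivAt.of_local_left_inverse (g_contAt g hg hgneg ht) hf ?_ ?_
  · have : Real.exp (g t) < 1 := Real.exp_lt_one_iff.2 hgt
    linarith
  · filter_upwards [Iio_mem_nhds ht] with y hy
    exact hg y hy.le

end gfacts



section gfacts2

variable (g : ℝ → ℝ)
variable (hg : ∀ t ≤ (0:ℝ), 1 + g t - Real.exp (g t) = t)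
variable (hgneg : ∀ t ≤ (0:ℝ), g t ≤ 0)

include hg hgneg in
private lemma Gfun_hasDeriv {t : ℝ} (ht : t < 0) : HasDerivAt (Gfun g) (Ffun g t) t := by
  have hgt : g t < 0 := g_neg g hg hgneg t ht
  have hgd := g_hasDeriv g hg hgneg ht
  have hu : HasDerivAt (fun t => Real.exp (g t)) (Real.exp (g t) * (1 - Real.exp (g t))⁻¹) t := by
    exact (Real.hasDerivAt_exp (g t)).comp t hgd
  have h2 := (((hu.sub_const 1).pow 4).neg).div_const 4
  have hne : 1 - Real.exp (g t) ≠ 0 := by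
    have : Real.exp (g t) < 1 := Real.exp_lt_one_iff.2 hgt
    linarith
  refine h2.congr_deriv ?_
  unfold Ffun
  field_simp
  ring

private lemma Gfun_nonpos (t : ℝ) : Gfun g t ≤ 0 := by
  have : (0:ℝ) ≤ (Real.exp (g t) - 1)^4 := by positivity
  unfold Gfun; linarith

private lemma exp_sq_le (s : ℝ) (hs : s ≤ 0) :
    (Real.exp s - 1)^2 ≤ 2*(Real.exp s - 1 - s) := by
  set φ := fun s : ℝ => 2*(Real.exp s - 1 - s) - (Real.exp s - 1)^2 with hφ
  have hd : ∀ x : ℝ, HasDerivAt φ (2*(Real.exp x - 1) - 2*(Real.exp x - 1)*Real.exp x) x := by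
    intro x
    have h1 : HasDerivAt (fun s : ℝ => 2*(Real.exp s - 1 - s)) (2*(Real.exp x - 1)) x := by
      have := (((Real.hasDerivAt_exp x).sub_const 1).sub (hasDerivAt_id x)).const_mul (2:ℝ)
      refine this.congr_deriv ?_
      try ring
    have h2 : HasDerivAt (fun s : ℝ => (Real.exp s - 1)^2) (2*(Real.exp x - 1)*Real.exp x) x := by
      have := ((Real.hasDerivAt_exp x).sub_const 1).pow 2
      refine this.congr_deriv ?_
      try ring
    exact h1.sub h2
  have hanti : Antitone φ := by
    apply antitone_of_deriv_nonpos (fun x => (hd x).differentiableAt)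
    intro x
    rw [(hd x).deriv]
    nlinarith [sq_nonneg (Real.exp x - 1)]
  have h0 := hanti hs
  simp only [hφ, Real.exp_zero] at h0
  nlinarith [h0]

include hg hgneg in
private lemma Gfun_bound {t : ℝ} (ht : t ≤ 0) : -(t^2) ≤ Gfun g t := by
  have h1 := hg t ht
  have h2 := exp_sq_le (g t) (hgneg t ht)
  have h3 : (Real.exp (g t) - 1)^2 ≤ -2*t := by linarith
  have h4 : ((Real.exp (g t) - 1)^2)^2 ≤ (-2*t)^2 := by
    apply sq_le_sq'
    · nlinarith [sq_nonneg (Real.exp (g t) - 1)]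
    · exact h3
  unfold Gfun
  nlinarith [h4]

include hg hgneg in
private lemma Gfun_zero : Gfun g 0 = 0 := by
  unfold Gfun
  rw [g_zero g hg hgneg]
  simp

include hg hgneg in
private lemma Ffun_pos {t : ℝ} (ht : t < 0) : 0 < Ffun g t := by
  have hgt : g t < 0 := g_neg g hg hgneg t ht
  have h1 : Real.exp (g t) < 1 := Real.exp_lt_one_iff.2 hgt
  have h2 : (0:ℝ) < Real.exp (g t) := Real.exp_pos _
  have h3 : 0 < (Real.exp (g t) - 1)^2 := by nlinarith
  unfold Ffun
  exact mul_pos h2 h3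

end gfacts2

private lemma sum_shift {V : Type} [Fintype V] [DecidableEq V] (h h' : V → ℝ) (x : V)
    (he : ∀ z, z ≠ x → h z = h' z) : ∑ z, h z = (∑ z, h' z) + (h x - h' x) := by
  have e1 := Finset.add_sum_erase Finset.univ h (Finset.mem_univ x)
  have e2 := Finset.add_sum_erase Finset.univ h' (Finset.mem_univ x)
  have e3 : ∑ z ∈ Finset.univ.erase x, h z = ∑ z ∈ Finset.univ.erase x, h' z :=
    Finset.sum_congr rfl (fun z hz => he z (Finset.ne_of_mem_erase hz))
  linarith

set_option maxHeartbeats 2000000 in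
theorem stmt_14 {V : Type} [Fintype V] [DecidableEq V] (w : V → V → ℝ) (mu : V → ℝ)
    (hsymm : ∀ x y, w x y = w y x) (hnonneg : ∀ x y, 0 ≤ w x y)
    (hmu : ∀ x, 0 < mu x)
    (hconn : ∀ x y : V, Relation.ReflTransGen (fun a b => 0 < w a b) x y)
    (g : ℝ → ℝ)
    (hg : ∀ t ≤ (0:ℝ), 1 + g t - Real.exp (g t) = t)
    (hgneg : ∀ t ≤ (0:ℝ), g t ≤ 0)
    (N : ℕ) (hN : 0 < N) (p : Fin N → V) (hp : Function.Injective p)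
    (v0 : V → ℝ)
    (hv0 : ∀ x, (mu x)⁻¹ * ∑ y, w x y * (v0 y - v0 x) =
      -(4 * π * N) / (∑ z, mu z) +
        4 * π * ∑ j, (if x = p j then (mu (p j))⁻¹ else 0))
    (lam' : ℝ) (hlam' : 0 < lam')
    (hsol : ∃ v : V → ℝ, (∀ x, v0 x + v x < 0) ∧
      ∀ x, (mu x)⁻¹ * ∑ y, w x y * (v y - v x) =
        -lam' * Real.exp (g (v0 x + v x)) * (Real.exp (g (v0 x + v x)) - 1) ^ 2 +
          4 * π * N / (∑ z, mu z)) :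
    ∀ lam : ℝ, lam' < lam →
      ∃ v : V → ℝ, (∀ x, v0 x + v x < 0) ∧
        ∀ x, (mu x)⁻¹ * ∑ y, w x y * (v y - v x) =
          -lam * Real.exp (g (v0 x + v x)) * (Real.exp (g (v0 x + v x)) - 1) ^ 2 +
            4 * π * N / (∑ z, mu z) := by
  classical
  intro lam hlam
  obtain ⟨v', hv'neg, hv'eq⟩ := hsol
  haveI hne : Nonempty V := ⟨p ⟨0, hN⟩⟩
  have hπ := Real.pi_pos
  have hN' : (0:ℝ) < N := by exact_mod_cast hN
  have hVol : (0:ℝ) < ∑ z, mu z := Finset.sum_pos (fun z _ => hmu z) Finset.univ_nonempty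
  set c : ℝ := 4 * π * N / (∑ z, mu z) with hcdef
  have hc : 0 < c := div_pos (by positivity) hVol
  -- energy functional
  set E : (V → ℝ) → ℝ := fun v =>
    (∑ z, ∑ y, w z y * (v y - v z)^2)/4 - lam * ∑ z, mu z * Gfun g (v0 z + v z)
      + c * ∑ z, mu z * v z with hEdef
  set K : Set (V → ℝ) := Set.Icc v' (fun x => -v0 x) with hKdef
  have hv'le : v' ≤ (fun x => -v0 x) := by
    intro x
    have := hv'neg x
    simp only
    linarith
  have hKne : K.Nonempty := ⟨v', Set.mem_Icc.2 ⟨le_rfl, hv'le⟩⟩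
  have hKcp : IsCompact K := isCompact_Icc
  have hGC : ContinuousOn (Gfun g) (Set.Iic 0) := by
    unfold Gfun
    exact (((Real.continuous_exp.comp_continuousOn (g_contOn g hg hgneg)).sub continuousOn_const).pow 4).neg.div_const 4
  have hEc : ContinuousOn E K := by
    apply ContinuousOn.add
    apply ContinuousOn.sub
    · apply Continuous.continuousOn
      apply Continuous.div_const
      exact continuous_finset_sum _ fun z _ => continuous_finset_sum _ fun y _ =>
        continuous_const.mul (((continuous_apply y).sub (continuous_apply z)).pow 2)
    · apply ContinuousOn.mul continuousOn_const
      apply continuousOn_finset_sum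
      intro z _
      apply ContinuousOn.mul continuousOn_const
      apply hGC.comp ((continuous_const.add (continuous_apply z)).continuousOn)
      intro v hv
      have h2 : v z ≤ -v0 z := (Set.mem_Icc.1 hv).2 z
      simp only [Set.mem_Iic]
      linarith
    · apply Continuous.continuousOn
      exact continuous_const.mul (continuous_finset_sum _ fun z _ => continuous_const.mul (continuous_apply z))
  obtain ⟨vs, hvsK, hmin0⟩ := hKcp.exists_isMinOn hKne hEc
  have hmin : ∀ v ∈ K, E vs ≤ E v := fun v hv => hmin0 hv
  have hlow : ∀ z, v' z ≤ vs z := fun z => (Set.mem_Icc.1 hvsK).1 z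
  have hhigh : ∀ z, vs z ≤ -v0 z := fun z => (Set.mem_Icc.1 hvsK).2 z
  set A : V → ℝ := fun x => ∑ y, w x y * (vs x - vs y) with hAdef
  -- update membership
  have hupdK : ∀ (x : V) (s : ℝ), v' x ≤ s → s ≤ -v0 x → Function.update vs x s ∈ K := by
    intro x s h1 h2
    refine Set.mem_Icc.2 ⟨fun z => ?_, fun z => ?_⟩ <;> by_cases hz : z = x
    · subst hz; simpa [Function.update_self] using h1
    · simpa [Function.update_of_ne hz] using hlow z
    · subst hz; simpa [Function.update_self] using h2
    · simpa [Function.update_of_ne hz] using hhigh z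
  -- the expansion lemma
  have hsum1 : ∀ (b : V) (f : V → ℝ), (∑ y, if y = b then f y else 0) = f b := by
    intro b f
    rw [Finset.sum_ite_eq' Finset.univ b f]
    simp
  have hexp : ∀ (x : V) (s : ℝ), E (Function.update vs x s) = E vs +
      ((s - vs x) * (A x + c * mu x) + (s - vs x)^2 * (((∑ y, w x y) - w x x)/2)
        - lam * mu x * (Gfun g (v0 x + s) - Gfun g (v0 x + vs x))) := by
    intro x s
    set d : ℝ := s - vs x with hd
    have hsval : s = vs x + d := by rw [hd]; ring
    -- Q part
    have hQdiff : ∀ z, (∑ y, w z y * (Function.update vs x s y - Function.update vs x s z)^2)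
        - (∑ y, w z y * (vs y - vs z)^2)
        = w z x * (2*d*(vs x - vs z) + d^2)
          + (if z = x then ((∑ y, w x y * (-(2*d*(vs y - vs x)) + d^2)) - w x x * d^2)
              - w x x * (2*d*(vs x - vs x) + d^2) else 0) := by
      intro z
      rw [← Finset.sum_sub_distrib]
      by_cases hz : z = x
      · subst hz
        rw [if_pos rfl]
        have hpt : ∀ y, w z y * (Function.update vs z s y - Function.update vs z s z)^2
            - w z y * (vs y - vs z)^2
            = (w z y * (-(2*d*(vs y - vs z)) + d^2)) - (if y = z then w z y * d^2 else 0) := by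
          intro y
          by_cases hy : y = z
          · subst hy
            simp [Function.update_self]
          · rw [Function.update_of_ne hy, Function.update_self, hsval, if_neg hy]
            ring
        rw [Finset.sum_congr rfl (fun y _ => hpt y), Finset.sum_sub_distrib, hsum1 z]
        ring
      · rw [if_neg hz, add_zero]
        have hpt : ∀ y, w z y * (Function.update vs x s y - Function.update vs x s z)^2
            - w z y * (vs y - vs z)^2
            = if y = x then w z x * (2*d*(vs x - vs z) + d^2) else 0 := by
          intro y
          by_cases hy : y = x
          · subst hy
            rw [Function.update_self, Function.update_of_ne hz, if_pos rfl, hsval]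
            ring
          · rw [Function.update_of_ne hy, Function.update_of_ne hz, if_neg hy]
            ring
        rw [Finset.sum_congr rfl (fun y _ => hpt y), hsum1 x]
    have hQ : (∑ z, ∑ y, w z y * (Function.update vs x s y - Function.update vs x s z)^2)
        = (∑ z, ∑ y, w z y * (vs y - vs z)^2)
          + (d * (4 * A x) + d^2 * (2*((∑ y, w x y) - w x x))) := by
      have h1 : (∑ z, ∑ y, w z y * (Function.update vs x s y - Function.update vs x s z)^2)
          - (∑ z, ∑ y, w z y * (vs y - vs z)^2)
          = ∑ z, ((∑ y, w z y * (Function.update vs x s y - Function.update vs x s z)^2)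
              - (∑ y, w z y * (vs y - vs z)^2)) := by
        rw [Finset.sum_sub_distrib]
      have h2 : ∑ z, ((∑ y, w z y * (Function.update vs x s y - Function.update vs x s z)^2)
              - (∑ y, w z y * (vs y - vs z)^2))
          = (∑ z, w z x * (2*d*(vs x - vs z) + d^2))
            + (((∑ y, w x y * (-(2*d*(vs y - vs x)) + d^2)) - w x x * d^2)
                - w x x * (2*d*(vs x - vs x) + d^2)) := by
        rw [Finset.sum_congr rfl (fun z _ => hQdiff z), Finset.sum_add_distrib]
        congr 1
        exact hsum1 x _
      have h3 : (∑ z, w z x * (2*d*(vs x - vs z) + d^2)) = ∑ z, w x z * (2*d*(vs x - vs z) + d^2) :=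
        Finset.sum_congr rfl (fun z _ => by rw [hsymm z x])
      have h4 : (∑ z, w x z * (2*d*(vs x - vs z) + d^2))
          = 2*d*(∑ z, w x z * (vs x - vs z)) + d^2 * (∑ z, w x z) := by
        rw [Finset.mul_sum, Finset.mul_sum, ← Finset.sum_add_distrib]
        exact Finset.sum_congr rfl (fun z _ => by ring)
      have h5 : (∑ y, w x y * (-(2*d*(vs y - vs x)) + d^2))
          = 2*d*(∑ y, w x y * (vs x - vs y)) + d^2 * (∑ y, w x y) := by
        rw [Finset.mul_sum, Finset.mul_sum, ← Finset.sum_add_distrib]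
        exact Finset.sum_congr rfl (fun y _ => by ring)
      rw [h2] at h1
      rw [h3, h4, h5] at h1
      have hAx : A x = ∑ z, w x z * (vs x - vs z) := rfl
      rw [← hAx] at h1
      linarith [h1]
    -- G part
    have hGpart : ∑ z, mu z * Gfun g (v0 z + Function.update vs x s z)
        = (∑ z, mu z * Gfun g (v0 z + vs z))
          + (mu x * Gfun g (v0 x + s) - mu x * Gfun g (v0 x + vs x)) := by
      have := sum_shift (fun z => mu z * Gfun g (v0 z + Function.update vs x s z))
        (fun z => mu z * Gfun g (v0 z + vs z)) x
        (fun z hz => by simp [Function.update_of_ne hz])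
      simpa [Function.update_self] using this
    have hcpart : ∑ z, mu z * Function.update vs x s z
        = (∑ z, mu z * vs z) + (mu x * s - mu x * vs x) := by
      have := sum_shift (fun z => mu z * Function.update vs x s z)
        (fun z => mu z * vs z) x (fun z hz => by simp [Function.update_of_ne hz])
      simpa [Function.update_self] using this
    simp only [hEdef]
    rw [hQ, hGpart, hcpart]
    ring
  -- named variation function
  set phi : V → ℝ → ℝ := fun x s => (s - vs x) * (A x + c * mu x)
      + (s - vs x)^2 * (((∑ y, w x y) - w x x)/2)
      - lam * mu x * (Gfun g (v0 x + s) - Gfun g (v0 x + vs x)) with hphidef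
  have hphi0 : ∀ x, phi x (vs x) = 0 := by
    intro x
    simp only [hphidef]
    ring
  have hphinn : ∀ (x : V) (s : ℝ), v' x ≤ s → s ≤ -v0 x → 0 ≤ phi x s := by
    intro x s h1 h2
    have h3 := hmin _ (hupdK x s h1 h2)
    rw [hexp x s] at h3
    simp only [hphidef]
    linarith
  have hder : ∀ x, v0 x + vs x < 0 → HasDerivAt (phi x)
      (A x + c * mu x - lam * mu x * Ffun g (v0 x + vs x)) (vs x) := by
    intro x htx
    have hGx : HasDerivAt (fun s : ℝ => Gfun g (v0 x + s)) (Ffun g (v0 x + vs x)) (vs x) := by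
      have h1 := Gfun_hasDeriv g hg hgneg htx
      have h2 : HasDerivAt (fun s : ℝ => v0 x + s) 1 (vs x) :=
        (hasDerivAt_id (vs x)).const_add (v0 x)
      have h3 := HasDerivAt.comp (vs x) h1 h2
      exact h3.congr_deriv (mul_one _)
    have h1 : HasDerivAt (fun s : ℝ => (s - vs x) * (A x + c * mu x)) (A x + c * mu x) (vs x) := by
      simpa using ((hasDerivAt_id (vs x)).sub_const (vs x)).mul_const (A x + c * mu x)
    have h2 : HasDerivAt (fun s : ℝ => (s - vs x)^2 * (((∑ y, w x y) - w x x)/2)) 0 (vs x) := by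
      have := (((hasDerivAt_id (vs x)).sub_const (vs x)).pow 2).mul_const (((∑ y, w x y) - w x x)/2)
      simpa using this
    have h3 : HasDerivAt (fun s : ℝ => lam * mu x * (Gfun g (v0 x + s) - Gfun g (v0 x + vs x)))
        (lam * mu x * Ffun g (v0 x + vs x)) (vs x) := (hGx.sub_const _).const_mul _
    have h4 := (h1.add h2).sub h3
    simp only [hphidef]
    exact h4.congr_deriv (by ring)
  clear hmin hmin0 hexp hupdK hEc hKne hKcp hGC hvsK hsum1 hv'le
  clear_value E K
  clear hEdef hKdef E K
  -- Step S : no upper contact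
  have hstepS : ∀ x, v0 x + vs x = 0 → (∀ j, x ≠ p j) ∧ (∀ y, 0 < w x y → v0 y + vs y = 0) := by
    intro x hx0
    have hroom : v' x < vs x := by have := hv'neg x; linarith
    have hAc : A x + c * mu x ≤ 0 := by
      have htend : Filter.Tendsto (fun r : ℝ => r * ((((∑ y, w x y) - w x x)/2) + lam * mu x))
          (nhdsWithin 0 (Set.Ioi 0)) (nhds 0) := by
        have h5 : Filter.Tendsto (fun r : ℝ => r * ((((∑ y, w x y) - w x x)/2) + lam * mu x))
            (nhds 0) (nhds (0 * ((((∑ y, w x y) - w x x)/2) + lam * mu x))) :=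
          (continuous_id.mul continuous_const).tendsto (0:ℝ)
        rw [zero_mul] at h5
        exact h5.mono_left nhdsWithin_le_nhds
      apply ge_of_tendsto htend
      filter_upwards [Ioo_mem_nhdsGT_of_mem (Set.mem_Ico.2 ⟨le_rfl, sub_pos.2 hroom⟩)] with r hr
      obtain ⟨hr0, hrlt⟩ := hr
      have hb1 : v' x ≤ vs x - r := by linarith
      have hb2 : vs x - r ≤ -v0 x := by linarith
      have h0 := hphinn x (vs x - r) hb1 hb2
      simp only [hphidef] at h0
      have hGv : Gfun g (v0 x + vs x) = 0 := by
        rw [hx0]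
        exact Gfun_zero g hg hgneg
      have harg : v0 x + (vs x - r) = -r := by linarith
      rw [harg, hGv] at h0
      have hGb : -((-r)^2) ≤ Gfun g (-r) := Gfun_bound g hg hgneg (by linarith)
      have hGn : Gfun g (-r) ≤ 0 := Gfun_nonpos g (-r)
      have hμ := (hmu x).le
      have hlampos : (0:ℝ) < lam := lt_trans hlam' hlam
      have hprod : (0:ℝ) ≤ lam * mu x * (Gfun g (-r) + r^2) :=
        mul_nonneg (mul_nonneg hlampos.le hμ) (by nlinarith [hGb])
      nlinarith [h0, hprod, hr0, mul_pos hr0 hr0]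
    -- discrete analysis
    have hArel : (∑ y, w x y * (vs y - vs x)) = -A x := by
      rw [hAdef, ← Finset.sum_neg_distrib]
      exact Finset.sum_congr rfl fun y _ => by ring
    have hv0x := hv0 x
    have hv0sum : (∑ y, w x y * (v0 y - v0 x))
        = mu x * (-(4 * π * N) / (∑ z, mu z) + 4 * π * ∑ j, (if x = p j then (mu (p j))⁻¹ else 0)) := by
      rw [← hv0x]
      field_simp [(hmu x).ne']
    have hcneg : -(4 * π * (N:ℝ)) / (∑ z, mu z) = -c := by
      rw [hcdef]
      ring
    have hkey : ∑ y, w x y * (v0 y + vs y)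
        = (∑ y, w x y * (v0 y - v0 x)) + (∑ y, w x y * (vs y - vs x)) := by
      rw [← Finset.sum_add_distrib]
      exact Finset.sum_congr rfl fun y _ => by linear_combination w x y * hx0
    have hTnn : (0:ℝ) ≤ ∑ j, (if x = p j then (mu (p j))⁻¹ else 0) :=
      Finset.sum_nonneg fun j _ => by
        by_cases hj : x = p j
        · simp [hj, (hmu (p j)).le, inv_nonneg]
        · simp [hj]
    have hge : 4 * π * (mu x * ∑ j, (if x = p j then (mu (p j))⁻¹ else 0))
        ≤ ∑ y, w x y * (v0 y + vs y) := by
      rw [hkey, hv0sum, hcneg, hArel]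
      nlinarith [hAc]
    have hle : ∑ y, w x y * (v0 y + vs y) ≤ 0 := by
      apply Finset.sum_nonpos
      intro y _
      have h1 := hnonneg x y
      have h2 := hhigh y
      nlinarith
    have hT0 : (∑ j, (if x = p j then (mu (p j))⁻¹ else 0)) = 0 := by
      have h1 : 4 * π * (mu x * ∑ j, (if x = p j then (mu (p j))⁻¹ else 0)) ≤ 0 := le_trans hge hle
      have h2 : 0 ≤ mu x * ∑ j, (if x = p j then (mu (p j))⁻¹ else 0) :=
        mul_nonneg (hmu x).le hTnn
      have h3 : mu x * (∑ j, (if x = p j then (mu (p j))⁻¹ else 0)) = 0 := by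
        rcases eq_or_lt_of_le h2 with h | h
        · exact h.symm
        · exfalso
          have h4 := mul_pos hπ h
          linarith only [h1, h4]
      exact (mul_eq_zero.1 h3).resolve_left (hmu x).ne'
    constructor
    · intro j hxj
      have hterm2 : ∀ j ∈ Finset.univ, (0:ℝ) ≤ (if x = p j then (mu (p j))⁻¹ else 0) := by
        intro j _
        by_cases hj : x = p j
        · simp [hj, (hmu (p j)).le, inv_nonneg]
        · simp [hj]
      have h4 := (Finset.sum_eq_zero_iff_of_nonneg hterm2).1 hT0 j (Finset.mem_univ j)
      rw [if_pos hxj] at h4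
      exact (hmu (p j)).ne' (inv_eq_zero.1 h4)
    · intro y hwy
      have hB0 : ∑ y, w x y * (v0 y + vs y) = 0 := by
        apply le_antisymm hle
        calc (0:ℝ) = 4 * π * (mu x * ∑ j, (if x = p j then (mu (p j))⁻¹ else 0)) := by
              rw [hT0]; ring
          _ ≤ _ := hge
      have hterm : ∀ z ∈ Finset.univ, w x z * (v0 z + vs z) ≤ 0 := by
        intro z _
        have h1 := hnonneg x z
        have h2 := hhigh z
        nlinarith
      have h5 := (Finset.sum_eq_zero_iff_of_nonpos hterm).1 hB0 y (Finset.mem_univ y)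
      have h6 := (mul_eq_zero.1 h5).resolve_left hwy.ne'
      linarith [h6]
  -- no upper contact anywhere
  have hS : ∀ x, v0 x + vs x < 0 := by
    by_contra hcon
    push_neg at hcon
    obtain ⟨x0, hx0⟩ := hcon
    have hx0' : v0 x0 + vs x0 = 0 := le_antisymm (by have := hhigh x0; linarith) hx0
    have hall : ∀ b, Relation.ReflTransGen (fun a b => 0 < w a b) x0 b → v0 b + vs b = 0 := by
      intro b hb
      induction hb with
      | refl => exact hx0'
      | tail h1 h2 ih => exact (hstepS _ ih).2 _ h2
    exact (hstepS _ (hall _ (hconn x0 (p ⟨0, hN⟩)))).1 ⟨0, hN⟩ rfl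
  -- no lower contact anywhere
  have hT : ∀ x, v' x < vs x := by
    intro x
    rcases lt_or_eq_of_le (hlow x) with hcase | hcase
    · exact hcase
    exfalso
    have htx : v0 x + vs x < 0 := hS x
    have hroom2 : vs x < -v0 x := by linarith
    have hdx := hder x htx
    have hs1 := hasDerivAt_iff_tendsto_slope.1 hdx
    have hs2 := hs1.mono_left (nhdsWithin_mono (vs x)
      (show Set.Ioi (vs x) ⊆ {vs x}ᶜ from fun s hs => Set.mem_compl_singleton_iff.2 (ne_of_gt hs)))
    have hnn : ∀ᶠ s in nhdsWithin (vs x) (Set.Ioi (vs x)), 0 ≤ slope (phi x) (vs x) s := by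
      filter_upwards [Ioo_mem_nhdsGT_of_mem (Set.mem_Ico.2 ⟨le_rfl, hroom2⟩)] with s hs
      have h1 : v' x ≤ s := by rw [hcase]; exact hs.1.le
      have h2 : s ≤ -v0 x := hs.2.le
      have hpos := hphinn x s h1 h2
      rw [slope_def_field]
      apply div_nonneg
      · rw [hphi0 x]; linarith
      · linarith [hs.1]
    have hge0 : 0 ≤ A x + c * mu x - lam * mu x * Ffun g (v0 x + vs x) := ge_of_tendsto hs2 hnn
    have hFp : 0 < Ffun g (v0 x + vs x) := Ffun_pos g hg hgneg htx
    have hAle : A x ≤ ∑ y, w x y * (v' x - v' y) := by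
      rw [hAdef]
      apply Finset.sum_le_sum
      intro y _
      apply mul_le_mul_of_nonneg_left _ (hnonneg x y)
      have := hlow y
      rw [← hcase]
      linarith
    have hneg : (∑ y, w x y * (v' x - v' y)) = -(∑ y, w x y * (v' y - v' x)) := by
      rw [← Finset.sum_neg_distrib]
      exact Finset.sum_congr rfl fun y _ => by ring
    have hv'x := hv'eq x
    have hsum' : (∑ y, w x y * (v' y - v' x))
        = mu x * (-lam' * Real.exp (g (v0 x + v' x)) * (Real.exp (g (v0 x + v' x)) - 1)^2
            + c) := by
      rw [← hv'x]
      field_simp [(hmu x).ne']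
    have hFrw : -lam' * Real.exp (g (v0 x + v' x)) * (Real.exp (g (v0 x + v' x)) - 1)^2
        = -lam' * Ffun g (v0 x + vs x) := by
      rw [hcase]
      unfold Ffun
      ring
    rw [hFrw] at hsum'
    nlinarith [hge0, hAle, hneg, hsum', hFp, hmu x, hlam',
      mul_pos (sub_pos.2 hlam) (mul_pos (hmu x) hFp)]
  -- conclusion : interior equation
  refine ⟨vs, hS, fun x => ?_⟩
  have htx := hS x
  have hlm : IsLocalMin (phi x) (vs x) := by
    have hmem : Set.Ioo (v' x) (-v0 x) ∈ nhds (vs x) := Ioo_mem_nhds (hT x) (by linarith)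
    filter_upwards [hmem] with s hs
    rw [hphi0 x]
    exact hphinn x s hs.1.le hs.2.le
  have hzero := hlm.hasDerivAt_eq_zero (hder x htx)
  have hArel : (∑ y, w x y * (vs y - vs x)) = -A x := by
    rw [hAdef, ← Finset.sum_neg_distrib]
    exact Finset.sum_congr rfl fun y _ => by ring
  have hAval : A x = lam * mu x * Ffun g (v0 x + vs x) - c * mu x := by linarith [hzero]
  rw [hArel, hAval]
  have hFf : Ffun g (v0 x + vs x)
      = Real.exp (g (v0 x + vs x)) * (Real.exp (g (v0 x + vs x)) - 1)^2 := rfl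
  rw [hFf]
  field_simp [(hmu x).ne']
  ring
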